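/- Let U = I_2 ⊗ |1⟩⟨1| + σ_x ⊗ |2⟩⟨2| + σ_y ⊗ |3⟩⟨3| acting on ℂ^2 ⊗ ℂ^3, let |ψ⟩ = (1/√2)(|1⟩_A|1⟩_{A'} + |2⟩_A|2⟩_{A'}) ⊗ (1/√3)(|1⟩+|2⟩+|3⟩)_B, where U acts on the A and B systems. Then the reduced state of U|ψ⟩ on the AA' system (tracing out B) is (1/3) of a rank-3 projector; i.e., U|ψ⟩ is a maximally entangled state of Schmidt rank 3 across the AA'|B cut. -/

import Mathlib

open Matrix Kronecker Finset Complex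

noncomputable def sX : Matrix (Fin 2) (Fin 2) ℂ := !![0, 1; 1, 0]
noncomputable def sY : Matrix (Fin 2) (Fin 2) ℂ := !![0, -Complex.I; Complex.I, 0]

/-- `U = I₂ ⊗ |1⟩⟨1| + σ_x ⊗ |2⟩⟨2| + σ_y ⊗ |3⟩⟨3|` on `ℂ² ⊗ ℂ³`. -/
noncomputable def U23 : Matrix (Fin 2 × Fin 3) (Fin 2 × Fin 3) ℂ :=
  (1 : Matrix (Fin 2) (Fin 2) ℂ) ⊗ₖ Matrix.single (0 : Fin 3) (0 : Fin 3) (1 : ℂ)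
  + sX ⊗ₖ Matrix.single (1 : Fin 3) (1 : Fin 3) (1 : ℂ)
  + sY ⊗ₖ Matrix.single (2 : Fin 3) (2 : Fin 3) (1 : ℂ)

/-- `U` acting on systems `A` and `B`, extended by the identity on the ancilla `A'`.
Index ordering: `((a, a'), b)`. -/
noncomputable def Ufull : Matrix ((Fin 2 × Fin 2) × Fin 3) ((Fin 2 × Fin 2) × Fin 3) ℂ :=
  Matrix.of fun x y =>
    (if x.1.2 = y.1.2 then (1 : ℂ) else 0) * U23 (x.1.1, x.2) (y.1.1, y.2)

/-- The product state `(1/√2)(|11⟩+|22⟩)_{AA'} ⊗ (1/√3)(|1⟩+|2⟩+|3⟩)_B`. -/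
noncomputable def psi : (Fin 2 × Fin 2) × Fin 3 → ℂ :=
  fun x => (if x.1.1 = x.1.2 then ((Real.sqrt 2 : ℂ))⁻¹ else 0) * ((Real.sqrt 3 : ℂ))⁻¹

noncomputable def sigma3 : Fin 3 → Matrix (Fin 2) (Fin 2) ℂ := ![1, sX, sY]

noncomputable def phi : (Fin 2 × Fin 2) × Fin 3 → ℂ := fun x =>
  (((Real.sqrt 2 : ℂ))⁻¹ * ((Real.sqrt 3 : ℂ))⁻¹) * sigma3 x.2 x.1.1 x.1.2

lemma hphi : Ufull.mulVec psi = phi := by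
  ext ⟨⟨a, a'⟩, b⟩
  fin_cases a <;> fin_cases a' <;> fin_cases b <;>
    simp [Ufull, U23, psi, phi, sigma3, sX, sY, Matrix.mulVec, dotProduct,
      Fintype.sum_prod_type, Fin.sum_univ_succ, Matrix.one_apply,
      Matrix.single, Matrix.kroneckerMap_apply] <;> ring

noncomputable def pA : Matrix (Fin 2 × Fin 2) (Fin 3) ℂ := Matrix.of fun p j =>
  if j = 0 then (if p.1 = p.2 then (2 : ℂ)⁻¹ else 0)
  else if j = 1 then (if p = (0, 1) then 1 else 0)
  else (if p = (1, 0) then 1 else 0)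

noncomputable def pB : Matrix (Fin 3) (Fin 2 × Fin 2) ℂ := Matrix.of fun j p =>
  if j = 0 then (if p.1 = p.2 then (1 : ℂ) else 0)
  else if j = 1 then (if p = (0, 1) then 1 else 0)
  else (if p = (1, 0) then 1 else 0)

lemma hBA : pB * pA = 1 := by
  ext i j
  fin_cases i <;> fin_cases j <;>
    simp [pA, pB, Matrix.mul_apply, Fintype.sum_prod_type, Fin.sum_univ_succ,
      Matrix.one_apply, Prod.ext_iff]

lemma hP_herm : (pA * pB)ᴴ = pA * pB := by
  ext p q
  fin_cases p <;> fin_cases q <;>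
    simp [pA, pB, Matrix.mul_apply, Fin.sum_univ_succ, Matrix.conjTranspose_apply,
      Prod.ext_iff]

lemma hP_idem : (pA * pB) * (pA * pB) = pA * pB := by
  rw [Matrix.mul_assoc, ← Matrix.mul_assoc pB, hBA, Matrix.one_mul]

lemma hP_rank : (pA * pB).rank = 3 := by
  refine le_antisymm ((Matrix.rank_mul_le_left pA pB).trans
    (pA.rank_le_card_width.trans (by simp))) ?_
  have h : pB * ((pA * pB) * pA) = 1 := by
    rw [Matrix.mul_assoc pA, hBA, Matrix.mul_one, hBA]
  calc (3 : ℕ) = (1 : Matrix (Fin 3) (Fin 3) ℂ).rank := by simp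
    _ = (pB * ((pA * pB) * pA)).rank := by rw [h]
    _ ≤ ((pA * pB) * pA).rank := Matrix.rank_mul_le_right _ _
    _ ≤ (pA * pB).rank := Matrix.rank_mul_le_left _ _

lemma key (v w : Fin 2 × Fin 2) (b : Fin 3) :
    phi (v, b) * star (phi (w, b))
      = (6 : ℂ)⁻¹ * (sigma3 b v.1 v.2 * star (sigma3 b w.1 w.2)) := by
  have h2 : (Real.sqrt 2 : ℂ) * (Real.sqrt 2 : ℂ) = 2 := by
    norm_cast; exact_mod_cast Real.mul_self_sqrt (by norm_num)
  have h3 : (Real.sqrt 3 : ℂ) * (Real.sqrt 3 : ℂ) = 3 := by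
    norm_cast; exact_mod_cast Real.mul_self_sqrt (by norm_num)
  have hc : (((Real.sqrt 2 : ℂ))⁻¹ * ((Real.sqrt 3 : ℂ))⁻¹)
      * (((Real.sqrt 2 : ℂ))⁻¹ * ((Real.sqrt 3 : ℂ))⁻¹) = (6 : ℂ)⁻¹ := by
    rw [show (((Real.sqrt 2 : ℂ))⁻¹ * ((Real.sqrt 3 : ℂ))⁻¹)
        * (((Real.sqrt 2 : ℂ))⁻¹ * ((Real.sqrt 3 : ℂ))⁻¹)
        = (((Real.sqrt 2 : ℂ) * (Real.sqrt 2 : ℂ)) * ((Real.sqrt 3 : ℂ) * (Real.sqrt 3 : ℂ)))⁻¹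
      by rw [mul_inv, mul_inv, mul_inv]; ring]
    rw [h2, h3]; norm_num
  have hstar : star (((Real.sqrt 2 : ℂ))⁻¹ * ((Real.sqrt 3 : ℂ))⁻¹)
      = ((Real.sqrt 2 : ℂ))⁻¹ * ((Real.sqrt 3 : ℂ))⁻¹ := by
    simp [Complex.star_def, map_inv₀, Complex.conj_ofReal]
  simp only [phi, star_mul', hstar]
  rw [← hc]; ring

theorem stmt_19 :
    ∃ P : Matrix (Fin 2 × Fin 2) (Fin 2 × Fin 2) ℂ,
      Pᴴ = P ∧ P * P = P ∧ P.rank = 3 ∧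
      (Matrix.of fun v w : Fin 2 × Fin 2 =>
          ∑ b : Fin 3, (Ufull.mulVec psi) (v, b) * star ((Ufull.mulVec psi) (w, b)))
        = ((3 : ℂ))⁻¹ • P := by
  refine ⟨pA * pB, hP_herm, hP_idem, hP_rank, ?_⟩
  ext v w
  simp only [Matrix.of_apply, hphi, key, ← Finset.mul_sum, Matrix.smul_apply, smul_eq_mul]
  fin_cases v <;> fin_cases w <;>
    simp [sigma3, sX, sY, pA, pB, Matrix.mul_apply, Matrix.one_apply,
      Fin.sum_univ_succ, Complex.star_def, Prod.ext_iff] <;> norm_num
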